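/- With the current position included in the context, for each t with 1 ≤ t ≤ L and each x ∈ (ℝ^d)^L, the map u ↦ u − Σ_{s≤t} β_s(u)·w_s(u), where β_s(u) = exp(uᵀ Aᵀ x_s) / Σ_{r≤t} exp(uᵀ Aᵀ x_r) (the keys x_1, …, x_t being held fixed, so the derivative is taken only through the query and value occurrences of the current token) and w_s(u) = x_s for s < t while w_t(u) = u, is Fréchet differentiable at u = x_t, with derivative the linear map given by the matrix (1 − α^≤_{tt}(x))·I_d − Σ^≤_t(x)·A. -/

import Mathlib

/- Self-inclusive attention (the current position is included in the context, s ≤ t):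
α^≤_{ts}(x) = exp(x_tᵀAᵀx_s)/Σ_{r≤t} exp(x_tᵀAᵀx_r), μ^≤_t(x) = Σ_{s≤t} α^≤_{ts}(x) x_s,
Σ^≤_t(x) = Σ_{s≤t} α^≤_{ts}(x) (x_s − μ^≤_t(x))(x_s − μ^≤_t(x))ᵀ. In the differentiated
map, keys x_1, …, x_t are held fixed while the query and value occurrences of the current
token vary: w_s(u) = x_s for s < t and w_t(u) = u. -/

noncomputable section

open Matrix

def alphaLe (d L : ℕ) (A : Matrix (Fin d) (Fin d) ℝ) (x : Fin L → Fin d → ℝ)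
    (t s : Fin L) : ℝ :=
  Real.exp (x t ⬝ᵥ (Aᵀ *ᵥ x s)) / ∑ r ∈ Finset.Iic t, Real.exp (x t ⬝ᵥ (Aᵀ *ᵥ x r))

def muLe (d L : ℕ) (A : Matrix (Fin d) (Fin d) ℝ) (x : Fin L → Fin d → ℝ) (t : Fin L) :
    Fin d → ℝ :=
  ∑ s ∈ Finset.Iic t, alphaLe d L A x t s • x s

def sigmaLe (d L : ℕ) (A : Matrix (Fin d) (Fin d) ℝ) (x : Fin L → Fin d → ℝ) (t : Fin L) :
    Matrix (Fin d) (Fin d) ℝ :=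
  ∑ s ∈ Finset.Iic t,
    alphaLe d L A x t s • Matrix.vecMulVec (x s - muLe d L A x t) (x s - muLe d L A x t)

lemma vecMulVec_mulVec' {d : ℕ} (u w v : Fin d → ℝ) :
    Matrix.vecMulVec u w *ᵥ v = (w ⬝ᵥ v) • u := by
  funext i
  simp only [Matrix.mulVec, Matrix.vecMulVec_apply, dotProduct, Pi.smul_apply, smul_eq_mul,
    Finset.sum_mul]
  exact Finset.sum_congr rfl fun j _ => by ring

lemma sum_mulVec' {d L : ℕ} (S : Finset (Fin L)) (M : Fin L → Matrix (Fin d) (Fin d) ℝ)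
    (v : Fin d → ℝ) : (∑ s ∈ S, M s) *ᵥ v = ∑ s ∈ S, M s *ᵥ v := by
  funext i
  simp only [Matrix.mulVec, dotProduct, Finset.sum_apply, Matrix.sum_apply, Finset.sum_mul]
  exact Finset.sum_comm

lemma sum_dotProduct' {d L : ℕ} (S : Finset (Fin L)) (f : Fin L → Fin d → ℝ)
    (w : Fin d → ℝ) : (∑ s ∈ S, f s) ⬝ᵥ w = ∑ s ∈ S, f s ⬝ᵥ w := by
  simp only [dotProduct, Finset.sum_apply, Finset.sum_mul]
  exact Finset.sum_comm

def phiC (d L : ℕ) (A : Matrix (Fin d) (Fin d) ℝ) (x : Fin L → Fin d → ℝ) (s : Fin L) :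
    (Fin d → ℝ) →L[ℝ] ℝ :=
  LinearMap.toContinuousLinearMap
    { toFun := fun v => v ⬝ᵥ (Aᵀ *ᵥ x s)
      map_add' := fun u v => add_dotProduct u v _
      map_smul' := fun c v => smul_dotProduct c v _ }

@[simp] lemma phiC_apply {d L : ℕ} (A : Matrix (Fin d) (Fin d) ℝ) (x : Fin L → Fin d → ℝ)
    (s : Fin L) (v : Fin d → ℝ) : phiC d L A x s v = v ⬝ᵥ (Aᵀ *ᵥ x s) := rfl

lemma coef_id (Es p T S : ℝ) (hS : S ≠ 0) :
    Es * -(S⁻¹ * T * S⁻¹) + S⁻¹ * (Es * p) = Es / S * (p - T / S) := by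
  field_simp
  ring

lemma coef_id2 (a p S : ℝ) (hS : S ≠ 0) : a / S * p * S = a * p := by
  field_simp


set_option maxHeartbeats 1000000 in
/-- With the current token included in the context, the map
`u ↦ u − Σ_{s≤t} β_s(u)·w_s(u)` (with β_s(u) = exp(uᵀAᵀx_s)/Σ_{r≤t} exp(uᵀAᵀx_r),
w_s(u) = x_s for s < t, w_t(u) = u) is Fréchet differentiable at `u = x_t` with
derivative the linear map given by the matrix `(1 − α^≤_{tt}(x))·I_d − Σ^≤_t(x)·A`. -/
theorem stmt17 (d L : ℕ) (hd : 1 ≤ d) (hL : 1 ≤ L) (A : Matrix (Fin d) (Fin d) ℝ)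
    (x : Fin L → Fin d → ℝ) (t : Fin L) :
    HasFDerivAt
      (fun u : Fin d → ℝ => u - ∑ s ∈ Finset.Iic t,
        (Real.exp (u ⬝ᵥ (Aᵀ *ᵥ x s)) /
          ∑ r ∈ Finset.Iic t, Real.exp (u ⬝ᵥ (Aᵀ *ᵥ x r))) •
          (if s = t then u else x s))
      (LinearMap.toContinuousLinearMap
        (Matrix.mulVecLin
          ((1 - alphaLe d L A x t t) • (1 : Matrix (Fin d) (Fin d) ℝ) -
            sigmaLe d L A x t * A)))
      (x t) := by
  have hS0 : (∑ r ∈ Finset.Iic t, Real.exp (x t ⬝ᵥ (Aᵀ *ᵥ x r))) ≠ 0 :=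
    ne_of_gt (Finset.sum_pos (fun r _ => Real.exp_pos _) ⟨t, Finset.mem_Iic.mpr le_rfl⟩)
  have hek : ∀ s : Fin L, HasFDerivAt (fun u : Fin d → ℝ => Real.exp (u ⬝ᵥ (Aᵀ *ᵥ x s)))
      (Real.exp (x t ⬝ᵥ (Aᵀ *ᵥ x s)) • phiC d L A x s) (x t) :=
    fun s => ((phiC d L A x s).hasFDerivAt).exp
  have hS : HasFDerivAt (fun u : Fin d → ℝ => ∑ r ∈ Finset.Iic t, Real.exp (u ⬝ᵥ (Aᵀ *ᵥ x r)))
      (∑ r ∈ Finset.Iic t, Real.exp (x t ⬝ᵥ (Aᵀ *ᵥ x r)) • phiC d L A x r) (x t) :=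
    HasFDerivAt.fun_sum fun r _ => hek r
  have hinv := (hasFDerivAt_inv' (𝕜 := ℝ) hS0).comp (x t) hS
  have hβ : ∀ s : Fin L, HasFDerivAt (fun u : Fin d → ℝ =>
      Real.exp (u ⬝ᵥ (Aᵀ *ᵥ x s)) *
        (∑ r ∈ Finset.Iic t, Real.exp (u ⬝ᵥ (Aᵀ *ᵥ x r)))⁻¹) _ (x t) :=
    fun s => (hek s).mul hinv
  have hw : ∀ s : Fin L, HasFDerivAt (fun u : Fin d → ℝ => if s = t then u else x s)
      (if s = t then ContinuousLinearMap.id ℝ (Fin d → ℝ) else 0) (x t) := by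
    intro s
    by_cases h : s = t
    · simp only [if_pos h]; exact hasFDerivAt_id _
    · simp only [if_neg h]; exact hasFDerivAt_const _ _
  have hg : ∀ s : Fin L, HasFDerivAt (fun u : Fin d → ℝ =>
      (Real.exp (u ⬝ᵥ (Aᵀ *ᵥ x s)) *
        (∑ r ∈ Finset.Iic t, Real.exp (u ⬝ᵥ (Aᵀ *ᵥ x r)))⁻¹) •
      (if s = t then u else x s)) _ (x t) := fun s => (hβ s).smul (hw s)
  have hD := (hasFDerivAt_id (𝕜 := ℝ) (x t)).sub
    (HasFDerivAt.fun_sum fun s (_ : s ∈ Finset.Iic t) => hg s)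
  simp only [div_eq_mul_inv]
  convert hD using 1
  any_goals rfl
  refine ContinuousLinearMap.ext fun v => ?_
  simp only [LinearMap.coe_toContinuousLinearMap', Matrix.mulVecLin_apply,
    ContinuousLinearMap.coe_sub', Pi.sub_apply, ContinuousLinearMap.coe_id', id_eq,
    ContinuousLinearMap.coe_sum', Finset.sum_apply, ContinuousLinearMap.add_apply,
    ContinuousLinearMap.coe_smul', Pi.smul_apply, ContinuousLinearMap.smulRight_apply,
    ContinuousLinearMap.coe_comp', Function.comp_apply, ContinuousLinearMap.neg_apply,
    ContinuousLinearMap.mulLeftRight_apply, ContinuousLinearMap.sum_apply,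
    ContinuousLinearMap.id_apply, phiC_apply, smul_eq_mul]
  -- notation
  -- basic facts
  have hq : ∀ s : Fin L, v ⬝ᵥ (Aᵀ *ᵥ x s) = x s ⬝ᵥ (A *ᵥ v) := fun s => by
    rw [Matrix.dotProduct_mulVec, Matrix.vecMul_transpose, dotProduct_comm]
  have halpha : ∀ s : Fin L, alphaLe d L A x t s =
      Real.exp (x t ⬝ᵥ (Aᵀ *ᵥ x s)) / ∑ r ∈ Finset.Iic t, Real.exp (x t ⬝ᵥ (Aᵀ *ᵥ x r)) := fun s => rfl
  have hsum1 : ∑ s ∈ Finset.Iic t, alphaLe d L A x t s = 1 := by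
    simp only [halpha, ← Finset.sum_div]
    exact div_self hS0
  have hm : muLe d L A x t ⬝ᵥ (A *ᵥ v) = ∑ r ∈ Finset.Iic t, alphaLe d L A x t r * (x r ⬝ᵥ (A *ᵥ v)) := by
    rw [muLe, sum_dotProduct']
    exact Finset.sum_congr rfl fun r _ => smul_dotProduct _ _ _
  have hzero : ∑ s ∈ Finset.Iic t, alphaLe d L A x t s * ((x s - muLe d L A x t) ⬝ᵥ (A *ᵥ v)) = 0 := by
    simp only [sub_dotProduct, mul_sub, Finset.sum_sub_distrib, ← Finset.sum_mul,
      hsum1, one_mul, ← hm, sub_self]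
  -- key sum identity
  have key : ∑ s ∈ Finset.Iic t,
      (Real.exp (x t ⬝ᵥ (Aᵀ *ᵥ x s)) * -((∑ r ∈ Finset.Iic t, Real.exp (x t ⬝ᵥ (Aᵀ *ᵥ x r)))⁻¹ *
          (∑ r ∈ Finset.Iic t, Real.exp (x t ⬝ᵥ (Aᵀ *ᵥ x r)) * (v ⬝ᵥ (Aᵀ *ᵥ x r))) *
          (∑ r ∈ Finset.Iic t, Real.exp (x t ⬝ᵥ (Aᵀ *ᵥ x r)))⁻¹) +
        (∑ r ∈ Finset.Iic t, Real.exp (x t ⬝ᵥ (Aᵀ *ᵥ x r)))⁻¹ * (Real.exp (x t ⬝ᵥ (Aᵀ *ᵥ x s)) * (v ⬝ᵥ (Aᵀ *ᵥ x s)))) • x s =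
      ∑ s ∈ Finset.Iic t,
        alphaLe d L A x t s • (((x s - muLe d L A x t) ⬝ᵥ (A *ᵥ v)) • (x s - muLe d L A x t)) := by
    have rhs : ∑ s ∈ Finset.Iic t,
        alphaLe d L A x t s • (((x s - muLe d L A x t) ⬝ᵥ (A *ᵥ v)) • (x s - muLe d L A x t)) =
        ∑ s ∈ Finset.Iic t,
          (alphaLe d L A x t s * ((x s - muLe d L A x t) ⬝ᵥ (A *ᵥ v))) • x s := by
      simp only [smul_smul, smul_sub, Finset.sum_sub_distrib, ← Finset.sum_smul, hzero,
        zero_smul, sub_zero]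
    rw [rhs]
    refine Finset.sum_congr rfl fun s _ => ?_
    congr 1
    have hmm : (x s - muLe d L A x t) ⬝ᵥ (A *ᵥ v) = (v ⬝ᵥ (Aᵀ *ᵥ x s)) -
        (∑ r ∈ Finset.Iic t, Real.exp (x t ⬝ᵥ (Aᵀ *ᵥ x r)) * (v ⬝ᵥ (Aᵀ *ᵥ x r))) / (∑ r ∈ Finset.Iic t, Real.exp (x t ⬝ᵥ (Aᵀ *ᵥ x r))) := by
      rw [sub_dotProduct, hm]
      simp only [← hq]
      congr 1
      rw [eq_div_iff hS0, Finset.sum_mul]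
      refine Finset.sum_congr rfl fun r _ => ?_
      rw [halpha]
      exact coef_id2 _ _ _ hS0
    rw [hmm, halpha]
    exact coef_id _ _ _ _ hS0
  -- assemble
  rw [Matrix.sub_mulVec, Matrix.smul_mulVec, Matrix.one_mulVec, sigmaLe, Finset.sum_mul,
    sum_mulVec']
  simp only [Matrix.smul_mul, Matrix.smul_mulVec, ← Matrix.mulVec_mulVec,
    vecMulVec_mulVec']
  have hif : ∀ s : Fin L, (if s = t then x t else x s) = x s := fun s => by
    split_ifs with h
    · rw [h]
    · rfl
  simp only [hif]
  rw [← key]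
  have hite : ∀ s : Fin L,
      (if s = t then ContinuousLinearMap.id ℝ (Fin d → ℝ) else 0) v
        = if s = t then v else 0 := fun s => by split_ifs <;> rfl
  simp only [hite, smul_ite, smul_zero, Finset.sum_add_distrib, Finset.sum_ite_eq',
    Finset.mem_Iic, le_refl, if_true]
  rw [halpha, div_eq_mul_inv, sub_smul, one_smul]
  abel


end
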